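/- Let μ ∈ Δ(X×A) and π_μ the induced policy with occupancy measure μ_{π_μ}. Then ‖μ - μ_{π_μ}‖₁ ≤ ‖ν₀ - T_γ μ‖₁, i.e., the ℓ¹ distribution mismatch between μ and the occupancy measure it induces is bounded by the violation degree of the Bellman flow constraints. -/

import Mathlib

open Finset

variable {X A : Type*} [Fintype X] [Fintype A] [DecidableEq X] [DecidableEq A]
  [Nonempty X] [Nonempty A]

/-- A finite discounted Markov decision process. -/
structure FinMDP (X A : Type*) [Fintype X] [Fintype A] where
  P : X → A → X → ℝ
  P_nonneg : ∀ x a x', 0 ≤ P x a x'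
  P_sum : ∀ x a, ∑ x', P x a x' = 1
  ν : X → ℝ
  ν_nonneg : ∀ x, 0 ≤ ν x
  ν_sum : ∑ x, ν x = 1
  γ : ℝ
  γ_pos : 0 < γ
  γ_lt_one : γ < 1

/-- A stationary Markov policy. -/
def FinMDP.IsPolicy (π : X → A → ℝ) : Prop :=
  (∀ x a, 0 ≤ π x a) ∧ ∀ x, ∑ a, π x a = 1

namespace FinMDP

variable (M : FinMDP X A)

/-- The state-action distribution at time `t` of policy `π` started from `ν'`. -/
noncomputable def saDist (ν' : X → ℝ) (π : X → A → ℝ) : ℕ → X × A → ℝ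
  | 0 => fun p => ν' p.1 * π p.1 p.2
  | t + 1 => fun p => (∑ q : X × A, saDist ν' π t q * M.P q.1 q.2 p.1) * π p.1 p.2

/-- The normalized discounted occupancy measure of `π` started from `ν'`. -/
noncomputable def occFrom (ν' : X → ℝ) (π : X → A → ℝ) (p : X × A) : ℝ :=
  (1 - M.γ) * ∑' t : ℕ, M.γ ^ t * M.saDist ν' π t p

/-- The normalized discounted occupancy measure of `π` (from the initial distribution). -/
noncomputable def occ (π : X → A → ℝ) : X × A → ℝ :=
  M.occFrom M.ν π

/-- The (normalized) value function of policy `π` for cost `c`. -/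
noncomputable def value (c : X × A → ℝ) (π : X → A → ℝ) (x : X) : ℝ :=
  ∑ p : X × A, M.occFrom (fun y => if y = x then 1 else 0) π p * c p

/-- The total expected (normalized) discounted cost `ρ_c(π) = ⟨μ_π, c⟩`. -/
noncomputable def cost (c : X × A → ℝ) (π : X → A → ℝ) : ℝ :=
  ∑ p : X × A, M.occ π p * c p

/-- The Bellman flow operator `T_γ μ = (1/(1-γ)) (B - γ P)ᵀ μ`. -/
noncomputable def Tflow (μ : X × A → ℝ) (x' : X) : ℝ :=
  (1 / (1 - M.γ)) * ((∑ a, μ (x', a)) - M.γ * ∑ p : X × A, μ p * M.P p.1 p.2 x')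

/-- The adjoint operator `T*_γ u = (1/(1-γ)) (B - γ P) u`. -/
noncomputable def Tadj (u : X → ℝ) (p : X × A) : ℝ :=
  (1 / (1 - M.γ)) * (u p.1 - M.γ * ∑ x', M.P p.1 p.2 x' * u x')

/-- `π` is an optimal policy for the forward RL problem with cost `c`. -/
def IsOptimal (c : X × A → ℝ) (π : X → A → ℝ) : Prop :=
  IsPolicy π ∧ ∀ π', IsPolicy π' → M.cost c π ≤ M.cost c π'

/-- The optimal value function `V*_c(x) = min_π V_c^π(x)`. -/
noncomputable def Vstar (c : X × A → ℝ) (x : X) : ℝ :=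
  sInf {v | ∃ π, IsPolicy π ∧ v = M.value c π x}

end FinMDP

/-- The policy induced by a state-action distribution:
`π_μ(a|x) = μ(x,a) / ∑_{a'} μ(x,a')` (uniform on zero-mass states). -/
noncomputable def inducedPolicy (μ : X × A → ℝ) (x : X) (a : A) : ℝ :=
  if (∑ a' : A, μ (x, a')) = 0 then (1 : ℝ) / (Fintype.card A)
  else μ (x, a) / ∑ a' : A, μ (x, a')

/-- `μ` is a probability distribution on state-action pairs. -/
def IsDist (μ : X × A → ℝ) : Prop := (∀ p, 0 ≤ μ p) ∧ ∑ p : X × A, μ p = 1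

/-- Membership in the probability simplex `Δ_{[n]}`. -/
def simplexPt {n : ℕ} (w : Fin n → ℝ) : Prop := (∀ i, 0 ≤ w i) ∧ ∑ i, w i = 1

/-- The `ℓ¹` norm of a finitely supported vector. -/
noncomputable def l1 {ι : Type*} [Fintype ι] (f : ι → ℝ) : ℝ := ∑ i, |f i|

/-- The `ℓ∞` norm of a finitely supported vector. -/
noncomputable def linf {ι : Type*} [Fintype ι] [Nonempty ι] (f : ι → ℝ) : ℝ :=
  Finset.univ.sup' Finset.univ_nonempty fun i => |f i|

/-- The cost `c_w = ∑ᵢ wᵢ cᵢ` parameterized by weights `w`. -/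
noncomputable def costW {nc : ℕ} (c : Fin nc → X × A → ℝ) (w : Fin nc → ℝ) :
    X × A → ℝ :=
  fun p => ∑ i, w i * c i p

/-- The objective of the dual LP `(D_{π_E})`. -/
noncomputable def dualObj {nc : ℕ} (M : FinMDP X A) (c : Fin nc → X × A → ℝ)
    (πE : X → A → ℝ) (u : X → ℝ) (w : Fin nc → ℝ) : ℝ :=
  ∑ p : X × A, M.occ πE p * (M.Tadj u p - costW c w p)

/-- Feasibility for the dual LP `(D_{π_E})`. -/
def dualFeasible {nc : ℕ} (M : FinMDP X A) (c : Fin nc → X × A → ℝ)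
    (u : X → ℝ) (w : Fin nc → ℝ) : Prop :=
  simplexPt w ∧ ∀ p, 0 ≤ costW c w p - M.Tadj u p

/-- Optimality for the dual LP `(D_{π_E})`. -/
def dualOptimal {nc : ℕ} (M : FinMDP X A) (c : Fin nc → X × A → ℝ)
    (πE : X → A → ℝ) (u : X → ℝ) (w : Fin nc → ℝ) : Prop :=
  dualFeasible M c u w ∧
    ∀ u' w', dualFeasible M c u' w' → dualObj M c πE u' w' ≤ dualObj M c πE u w

/-- The `C`-distance `δ_C(π, π_E) = max_i (ρ_{c_i}(π) - ρ_{c_i}(π_E))`. -/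
noncomputable def gapMax {nc : ℕ} [NeZero nc] (M : FinMDP X A)
    (c : Fin nc → X × A → ℝ) (πE π : X → A → ℝ) : ℝ :=
  haveI : Nonempty (Fin nc) := ⟨⟨0, Nat.pos_of_ne_zero (NeZero.ne nc)⟩⟩
  Finset.univ.sup' Finset.univ_nonempty fun i => M.cost (c i) π - M.cost (c i) πE

/-- `π_A` is an apprentice policy: it minimizes `δ_C(·, π_E)` over stationary policies. -/
def IsApprentice {nc : ℕ} [NeZero nc] (M : FinMDP X A)
    (c : Fin nc → X × A → ℝ) (πE πA : X → A → ℝ) : Prop :=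
  FinMDP.IsPolicy πA ∧
    ∀ π, FinMDP.IsPolicy π → gapMax M c πE πA ≤ gapMax M c πE π

/-- The parameter set `Λ = {λ : ‖λ‖₂ ≤ β/√n_u}`. -/
def lamSet (nu : ℕ) (β : ℝ) : Set (Fin nu → ℝ) :=
  {l | Real.sqrt (∑ k, l k ^ 2) ≤ β / Real.sqrt nu}

/-- The reduced Lagrangian `L_r(θ, λ, w) = ⟨μ_θ - μ_{π_E}, c_w - T*_γ u_λ⟩`. -/
noncomputable def Lr {nm nu nc : ℕ} (M : FinMDP X A)
    (Φ : Fin nm → X × A → ℝ) (Ψ : Fin nu → X → ℝ) (c : Fin nc → X × A → ℝ)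
    (πE : X → A → ℝ) (θ : Fin nm → ℝ) (lam : Fin nu → ℝ) (w : Fin nc → ℝ) : ℝ :=
  ∑ p : X × A, ((∑ i, θ i * Φ i p) - M.occ πE p) *
    ((∑ j, w j * c j p) - M.Tadj (fun x => ∑ k, lam k * Ψ k x) p)

/-- The saddle-point residual of a point `(θ, λ, w)` for the reduced Lagrangian. -/
noncomputable def epsSad {nm nu nc : ℕ} (M : FinMDP X A)
    (Φ : Fin nm → X × A → ℝ) (Ψ : Fin nu → X → ℝ) (c : Fin nc → X × A → ℝ)
    (πE : X → A → ℝ) (β : ℝ)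
    (θ : Fin nm → ℝ) (lam : Fin nu → ℝ) (w : Fin nc → ℝ) : ℝ :=
  sSup {v | ∃ lam' ∈ lamSet nu β, ∃ w', simplexPt w' ∧ v = Lr M Φ Ψ c πE θ lam' w'} -
    sInf {v | ∃ θ', simplexPt θ' ∧ v = Lr M Φ Ψ c πE θ' lam w}

section DMBAux

open Filter

variable {X A : Type*} [Fintype X] [Fintype A] [DecidableEq X] [DecidableEq A]
  [Nonempty X] [Nonempty A]

/-- State transition operator under policy `π`. -/
noncomputable def DMB.step (M : FinMDP X A) (π : X → A → ℝ) (f : X → ℝ) (x' : X) : ℝ :=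
  ∑ q : X × A, f q.1 * π q.1 q.2 * M.P q.1 q.2 x'

/-- Iterated state transition. -/
noncomputable def DMB.iter (M : FinMDP X A) (π : X → A → ℝ) (f : X → ℝ) : ℕ → X → ℝ
  | 0 => f
  | t + 1 => DMB.step M π (DMB.iter M π f t)

namespace DMB

lemma step_sub (M : FinMDP X A) (π : X → A → ℝ) (f g : X → ℝ) (x' : X) :
    step M π (fun y => f y - g y) x' = step M π f x' - step M π g x' := by
  simp [step, sub_mul, Finset.sum_sub_distrib]

lemma step_const_mul (M : FinMDP X A) (π : X → A → ℝ) (c : ℝ) (f : X → ℝ) (x' : X) :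
    step M π (fun y => c * f y) x' = c * step M π f x' := by
  simp only [step, Finset.mul_sum]
  exact Finset.sum_congr rfl fun q _ => by ring

lemma l1_step_le (M : FinMDP X A) {π : X → A → ℝ} (hπ : FinMDP.IsPolicy π) (f : X → ℝ) :
    l1 (step M π f) ≤ l1 f := by
  have h1 : l1 (step M π f) ≤ ∑ x', ∑ q : X × A, |f q.1| * π q.1 q.2 * M.P q.1 q.2 x' := by
    refine Finset.sum_le_sum fun x' _ => ?_
    refine (Finset.abs_sum_le_sum_abs _ _).trans_eq ?_
    refine Finset.sum_congr rfl fun q _ => ?_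
    rw [abs_mul, abs_mul, abs_of_nonneg (hπ.1 _ _), abs_of_nonneg (M.P_nonneg _ _ _)]
  refine h1.trans_eq ?_
  rw [Finset.sum_comm]
  calc ∑ q : X × A, ∑ x', |f q.1| * π q.1 q.2 * M.P q.1 q.2 x'
      = ∑ q : X × A, |f q.1| * π q.1 q.2 := by
        refine Finset.sum_congr rfl fun q _ => ?_
        rw [← Finset.mul_sum, M.P_sum, mul_one]
    _ = ∑ x, |f x| * ∑ a, π x a := by
        rw [Fintype.sum_prod_type]
        exact Finset.sum_congr rfl fun x _ => by rw [Finset.mul_sum]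
    _ = l1 f := by simp [l1, hπ.2]

lemma l1_iter_le (M : FinMDP X A) {π : X → A → ℝ} (hπ : FinMDP.IsPolicy π) (f : X → ℝ) :
    ∀ t, l1 (iter M π f t) ≤ l1 f
  | 0 => le_rfl
  | t + 1 => (l1_step_le M hπ (iter M π f t)).trans (l1_iter_le M hπ f t)

lemma abs_le_l1 {f : X → ℝ} (x : X) : |f x| ≤ l1 f :=
  Finset.single_le_sum (fun i _ => abs_nonneg (f i)) (Finset.mem_univ x)

lemma abs_iter_le (M : FinMDP X A) {π : X → A → ℝ} (hπ : FinMDP.IsPolicy π) (f : X → ℝ)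
    (t : ℕ) (x : X) : |iter M π f t x| ≤ l1 f :=
  (abs_le_l1 x).trans (l1_iter_le M hπ f t)

lemma iter_sub (M : FinMDP X A) (π : X → A → ℝ) (f g : X → ℝ) :
    ∀ t x, iter M π (fun y => f y - g y) t x = iter M π f t x - iter M π g t x
  | 0, _ => rfl
  | t + 1, x => by
    have hfun : (fun y => iter M π (fun z => f z - g z) t y)
        = fun y => iter M π f t y - iter M π g t y := funext (iter_sub M π f g t)
    show step M π (iter M π (fun z => f z - g z) t) x = _
    rw [show iter M π (fun z => f z - g z) t = fun y => iter M π f t y - iter M π g t y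
      from hfun, step_sub]
    rfl

lemma iter_flow (M : FinMDP X A) (π : X → A → ℝ) (f g : X → ℝ) (γ : ℝ)
    (hfg : ∀ x, (1 - γ) * f x = g x - γ * step M π g x) :
    ∀ t x, (1 - γ) * iter M π f t x = iter M π g t x - γ * iter M π g (t + 1) x
  | 0, x => hfg x
  | t + 1, x => by
    have hfun : (fun y => (1 - γ) * iter M π f t y)
        = fun y => iter M π g t y - γ * iter M π g (t + 1) y :=
      funext (iter_flow M π f g γ hfg t)
    calc (1 - γ) * iter M π f (t + 1) x
        = step M π (fun y => (1 - γ) * iter M π f t y) x := (step_const_mul M π _ _ x).symm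
      _ = step M π (fun y => iter M π g t y - γ * iter M π g (t + 1) y) x := by rw [hfun]
      _ = step M π (iter M π g t) x - step M π (fun y => γ * iter M π g (t + 1) y) x := by
          rw [step_sub]
      _ = iter M π g (t + 1) x - γ * iter M π g (t + 2) x := by
          rw [step_const_mul]; rfl

lemma summable_aux {γ : ℝ} (h0 : 0 ≤ γ) (h1 : γ < 1) (C : ℝ) (u : ℕ → ℝ)
    (hu : ∀ t, |u t| ≤ C) : Summable (fun t => γ ^ t * u t) := by
  refine Summable.of_norm_bounded
    ((summable_geometric_of_lt_one h0 h1).mul_right C) fun t => ?_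
  rw [Real.norm_eq_abs, abs_mul, abs_pow, abs_of_nonneg h0]
  exact mul_le_mul_of_nonneg_left (hu t) (pow_nonneg h0 t)

lemma saDist_eq (M : FinMDP X A) (π : X → A → ℝ) (ν' : X → ℝ) :
    ∀ t (p : X × A), M.saDist ν' π t p = iter M π ν' t p.1 * π p.1 p.2
  | 0, p => rfl
  | t + 1, p => by
    show (∑ q : X × A, M.saDist ν' π t q * M.P q.1 q.2 p.1) * π p.1 p.2 = _
    have : (∑ q : X × A, M.saDist ν' π t q * M.P q.1 q.2 p.1)
        = step M π (iter M π ν' t) p.1 := by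
      refine Finset.sum_congr rfl fun q _ => ?_
      rw [saDist_eq M π ν' t q]
    rw [this]; rfl

end DMB

end DMBAux

/-- For any distribution `μ ∈ Δ(X×A)` with induced policy `π_μ`, the
`ℓ¹` distribution mismatch between `μ` and the occupancy measure of `π_μ` is bounded
by the violation degree of the Bellman flow constraints. -/
theorem distribution_mismatch_bound (M : FinMDP X A)
    (μ : X × A → ℝ) (hμ : IsDist μ) :
    l1 (fun p => μ p - M.occ (inducedPolicy μ) p)
      ≤ l1 (fun x => M.ν x - M.Tflow μ x) := by
  classical
  have hγ0 : (0:ℝ) ≤ M.γ := le_of_lt M.γ_pos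
  have hγ1 : M.γ < 1 := M.γ_lt_one
  have h1γ : (0:ℝ) < 1 - M.γ := by linarith
  set π := inducedPolicy μ with hπdef
  -- π is a policy
  have hπ : FinMDP.IsPolicy π := by
    constructor
    · intro x a
      simp only [hπdef, inducedPolicy]
      split_ifs with h
      · positivity
      · exact div_nonneg (hμ.1 _) (Finset.sum_nonneg fun a' _ => hμ.1 _)
    · intro x
      by_cases h : (∑ a' : A, μ (x, a')) = 0
      · simp only [hπdef, inducedPolicy, h, if_true]
        rw [Finset.sum_const, Finset.card_univ, nsmul_eq_mul]
        rw [mul_one_div, div_self (by exact_mod_cast Fintype.card_ne_zero)]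
      · simp only [hπdef, inducedPolicy, h, if_false]
        rw [← Finset.sum_div, div_self h]
  set m : X → ℝ := fun x => ∑ a, μ (x, a) with hmdef
  have hm : ∀ p : X × A, μ p = m p.1 * π p.1 p.2 := by
    rintro ⟨x, a⟩
    by_cases h : (∑ a' : A, μ (x, a')) = 0
    · have hz : μ (x, a) = 0 :=
        (Finset.sum_eq_zero_iff_of_nonneg (fun a' _ => hμ.1 (x, a'))).mp h a (Finset.mem_univ a)
      simp only [hmdef, hπdef]
      simp [hz, h]
    · simp only [hmdef, hπdef, inducedPolicy, h, if_false]
      field_simp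
  set e : X → ℝ := fun x => M.ν x - M.Tflow μ x with hedef
  have hflow : ∀ x, (1 - M.γ) * (fun y => M.ν y - e y) x
      = m x - M.γ * DMB.step M π m x := by
    intro x
    show (1 - M.γ) * (M.ν x - e x) = m x - M.γ * DMB.step M π m x
    have hs : DMB.step M π m x = ∑ p : X × A, μ p * M.P p.1 p.2 x := by
      exact Finset.sum_congr rfl fun p _ => by rw [hm p]
    have he : M.ν x - e x = M.Tflow μ x := by simp [hedef]
    rw [he, FinMDP.Tflow, hs]
    rw [← mul_assoc, mul_one_div, div_self (ne_of_gt h1γ), one_mul]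
  -- bounds
  have hCe : ∀ t x, |DMB.iter M π e t x| ≤ l1 e := fun t x => DMB.abs_iter_le M hπ e t x
  have hCν : ∀ t x, |DMB.iter M π M.ν t x| ≤ l1 M.ν := fun t x => DMB.abs_iter_le M hπ M.ν t x
  have hCh : ∀ t x, |DMB.iter M π (fun y => M.ν y - e y) t x| ≤ l1 (fun y => M.ν y - e y) :=
    fun t x => DMB.abs_iter_le M hπ _ t x
  have hCm : ∀ t x, |DMB.iter M π m t x| ≤ l1 m := fun t x => DMB.abs_iter_le M hπ m t x
  have sum_d : ∀ x, Summable (fun t => M.γ ^ t * DMB.iter M π M.ν t x) :=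
    fun x => DMB.summable_aux hγ0 hγ1 (l1 M.ν) _ (fun t => hCν t x)
  have sum_g : ∀ x, Summable (fun t => M.γ ^ t * DMB.iter M π e t x) :=
    fun x => DMB.summable_aux hγ0 hγ1 (l1 e) _ (fun t => hCe t x)
  have sum_h : ∀ x, Summable (fun t => M.γ ^ t * DMB.iter M π (fun y => M.ν y - e y) t x) :=
    fun x => DMB.summable_aux hγ0 hγ1 _ _ (fun t => hCh t x)
  have sum_gabs : ∀ x, Summable (fun t => M.γ ^ t * |DMB.iter M π e t x|) :=
    fun x => DMB.summable_aux hγ0 hγ1 (l1 e) _ (fun t => by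
      rw [abs_abs]; exact hCe t x)
  -- occupancy measure in terms of iterates
  have hocc : ∀ p : X × A, M.occ π p
      = ((1 - M.γ) * ∑' t, M.γ ^ t * DMB.iter M π M.ν t p.1) * π p.1 p.2 := by
    intro p
    show (1 - M.γ) * (∑' t, M.γ ^ t * M.saDist M.ν π t p) = _
    have : (∑' t, M.γ ^ t * M.saDist M.ν π t p)
        = (∑' t, M.γ ^ t * DMB.iter M π M.ν t p.1) * π p.1 p.2 := by
      rw [← tsum_mul_right]
      exact tsum_congr fun t => by rw [DMB.saDist_eq M π M.ν t p, mul_assoc]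
    rw [this, mul_assoc]
  -- key telescoping identity
  have hkey : ∀ x, m x = (1 - M.γ) * ∑' t, M.γ ^ t * DMB.iter M π (fun y => M.ν y - e y) t x := by
    intro x
    have hsum2 : Summable (fun t => (1 - M.γ) *
        (M.γ ^ t * DMB.iter M π (fun y => M.ν y - e y) t x)) := (sum_h x).mul_left _
    have hhs : HasSum (fun t => (1 - M.γ) *
        (M.γ ^ t * DMB.iter M π (fun y => M.ν y - e y) t x)) (m x) := by
      rw [hsum2.hasSum_iff_tendsto_nat]
      have heq : ∀ n, (∑ t ∈ Finset.range n,
          (1 - M.γ) * (M.γ ^ t * DMB.iter M π (fun y => M.ν y - e y) t x))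
          = m x - M.γ ^ n * DMB.iter M π m n x := by
        intro n
        have hterm : ∀ t, (1 - M.γ) * (M.γ ^ t * DMB.iter M π (fun y => M.ν y - e y) t x)
            = M.γ ^ t * DMB.iter M π m t x - M.γ ^ (t + 1) * DMB.iter M π m (t + 1) x := by
          intro t
          have h2 := DMB.iter_flow M π (fun y => M.ν y - e y) m M.γ hflow t x
          calc (1 - M.γ) * (M.γ ^ t * DMB.iter M π (fun y => M.ν y - e y) t x)
              = M.γ ^ t * ((1 - M.γ) * DMB.iter M π (fun y => M.ν y - e y) t x) := by ring
            _ = M.γ ^ t * (DMB.iter M π m t x - M.γ * DMB.iter M π m (t + 1) x) := by rw [h2]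
            _ = _ := by ring
        rw [Finset.sum_congr rfl fun t _ => hterm t,
          Finset.sum_range_sub' (fun t => M.γ ^ t * DMB.iter M π m t x) n]
        simp [DMB.iter]
      simp only [heq]
      have htend : Filter.Tendsto (fun n => M.γ ^ n * DMB.iter M π m n x)
          Filter.atTop (nhds 0) := by
        refine squeeze_zero_norm (f := fun n => M.γ ^ n * DMB.iter M π m n x)
          (a := fun n => l1 m * M.γ ^ n) (fun n => ?_) ?_
        · rw [Real.norm_eq_abs, abs_mul, abs_pow, abs_of_nonneg hγ0, mul_comm]
          exact mul_le_mul_of_nonneg_right (hCm n x) (pow_nonneg hγ0 n)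
        · simpa using (tendsto_pow_atTop_nhds_zero_of_lt_one hγ0 hγ1).const_mul (l1 m)
      have := Filter.Tendsto.sub (tendsto_const_nhds (x := m x)) htend
      simpa using this
    rw [← hhs.tsum_eq, tsum_mul_left]
  -- iter of ν - e splits
  have hsplit : ∀ t x, DMB.iter M π (fun y => M.ν y - e y) t x
      = DMB.iter M π M.ν t x - DMB.iter M π e t x := fun t x => DMB.iter_sub M π M.ν e t x
  -- the pointwise deviation identity
  have hΔ : ∀ x, m x - (1 - M.γ) * ∑' t, M.γ ^ t * DMB.iter M π M.ν t x
      = -((1 - M.γ) * ∑' t, M.γ ^ t * DMB.iter M π e t x) := by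
    intro x
    rw [hkey x, ← mul_sub, ← Summable.tsum_sub (sum_h x) (sum_d x)]
    have hinner : (∑' t, (M.γ ^ t * DMB.iter M π (fun y => M.ν y - e y) t x
        - M.γ ^ t * DMB.iter M π M.ν t x)) = -∑' t, M.γ ^ t * DMB.iter M π e t x := by
      rw [← tsum_neg]
      exact tsum_congr fun t => by rw [hsplit t x]; ring
    rw [hinner]; ring
  -- rewrite the LHS as a sum over states
  have hL : l1 (fun p => μ p - M.occ π p)
      = ∑ x, |m x - (1 - M.γ) * ∑' t, M.γ ^ t * DMB.iter M π M.ν t x| := by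
    show (∑ p : X × A, |μ p - M.occ π p|) = _
    calc ∑ p : X × A, |μ p - M.occ π p|
        = ∑ p : X × A, |m p.1 - (1 - M.γ) * ∑' t, M.γ ^ t * DMB.iter M π M.ν t p.1|
            * π p.1 p.2 := by
          refine Finset.sum_congr rfl fun p _ => ?_
          rw [hm p, hocc p, ← sub_mul, abs_mul, abs_of_nonneg (hπ.1 _ _)]
      _ = ∑ x, |m x - (1 - M.γ) * ∑' t, M.γ ^ t * DMB.iter M π M.ν t x| * ∑ a, π x a := by
          rw [Fintype.sum_prod_type]
          exact Finset.sum_congr rfl fun x _ => by rw [Finset.mul_sum]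
      _ = _ := by simp [hπ.2]
  rw [hL]
  -- main estimate
  have hstep1 : ∀ x, |m x - (1 - M.γ) * ∑' t, M.γ ^ t * DMB.iter M π M.ν t x|
      ≤ (1 - M.γ) * ∑' t, M.γ ^ t * |DMB.iter M π e t x| := by
    intro x
    rw [hΔ x, abs_neg, abs_mul, abs_of_pos h1γ]
    refine mul_le_mul_of_nonneg_left ?_ (le_of_lt h1γ)
    refine (norm_tsum_le_tsum_norm (f := fun t => M.γ ^ t * DMB.iter M π e t x) ?_).trans_eq ?_
    · refine ((sum_gabs x).congr fun t => ?_)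
      rw [Real.norm_eq_abs, abs_mul, abs_pow, abs_of_nonneg hγ0]
    · exact tsum_congr fun t => by
        rw [Real.norm_eq_abs, abs_mul, abs_pow, abs_of_nonneg hγ0]
  calc ∑ x, |m x - (1 - M.γ) * ∑' t, M.γ ^ t * DMB.iter M π M.ν t x|
      ≤ ∑ x, (1 - M.γ) * ∑' t, M.γ ^ t * |DMB.iter M π e t x| :=
        Finset.sum_le_sum fun x _ => hstep1 x
    _ = (1 - M.γ) * ∑' t, ∑ x, M.γ ^ t * |DMB.iter M π e t x| := by
        rw [← Finset.mul_sum, Summable.tsum_finsetSum (fun x _ => sum_gabs x)]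
    _ = (1 - M.γ) * ∑' t, M.γ ^ t * l1 (DMB.iter M π e t) := by
        congr 1
        exact tsum_congr fun t => by rw [l1, Finset.mul_sum]
    _ ≤ (1 - M.γ) * ∑' t, M.γ ^ t * l1 e := by
        refine mul_le_mul_of_nonneg_left ?_ (le_of_lt h1γ)
        refine Summable.tsum_le_tsum (fun t => ?_) ?_ ?_
        · exact mul_le_mul_of_nonneg_left (DMB.l1_iter_le M hπ e t) (pow_nonneg hγ0 t)
        · exact DMB.summable_aux hγ0 hγ1 (l1 e) _ (fun t => by
            rw [abs_of_nonneg (Finset.sum_nonneg fun i _ => abs_nonneg _)]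
            exact DMB.l1_iter_le M hπ e t)
        · exact (summable_geometric_of_lt_one hγ0 hγ1).mul_right _
    _ = l1 e := by
        rw [tsum_mul_right, tsum_geometric_of_lt_one hγ0 hγ1, ← mul_assoc,
          mul_inv_cancel₀ (ne_of_gt h1γ), one_mul]
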